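/- Let H and Q be bounded operators on a complex Hilbert space, and for s ∈ ℝ set Q(s) = e^{iHs} Q e^{−iHs} and I(s) = i e^{iHs} (HQ − QH) e^{−iHs}. Then for every t ≥ 0, ∫₀ᵗ ∫₀ᵗ T(I(t₁)I(t₂)) dt₂ dt₁ + ∫₀ᵗ [Q(s), I(s)] ds = Q(t)² − 2 Q(t) Q + Q², where T(I(t₁)I(t₂)) = I(t₁)I(t₂) if t₁ ≥ t₂ and I(t₂)I(t₁) otherwise, and [A,B] = AB − BA. (This is the second-order coefficient of the identity equating the T-ordered exponential of the interaction Hamiltonian with the Matthews T*-ordered exponential of the current.) -/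

import Mathlib

open MeasureTheory Filter

/-- Heisenberg evolution of the charge: `Q(s) = e^{iHs} Q e^{−iHs}`. -/
noncomputable def heisQ {A : Type*} [NormedRing A] [NormedAlgebra ℂ A] [CompleteSpace A]
    (H Q : A) (s : ℝ) : A :=
  NormedSpace.exp ((Complex.I * (s : ℂ)) • H) * Q *
    NormedSpace.exp ((-(Complex.I * (s : ℂ))) • H)

/-- The current `I(s) = i e^{iHs}(HQ − QH)e^{−iHs}`, the time derivative of `Q(s)`. -/
noncomputable def heisI {A : Type*} [NormedRing A] [NormedAlgebra ℂ A] [CompleteSpace A]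
    (H Q : A) (s : ℝ) : A :=
  Complex.I • (NormedSpace.exp ((Complex.I * (s : ℂ)) • H) * (H * Q - Q * H) *
    NormedSpace.exp ((-(Complex.I * (s : ℂ))) • H))

section aux
set_option linter.unusedSectionVars false
variable {A : Type*} [NormedRing A] [NormedAlgebra ℂ A] [CompleteSpace A] (H Q : A)

private lemma hasDerivAt_expP (s : ℝ) :
    HasDerivAt (fun s : ℝ => NormedSpace.exp ((Complex.I * (s : ℂ)) • H))
      (Complex.I • (H * NormedSpace.exp ((Complex.I * (s : ℂ)) • H))) s := by
  have key : ∀ z : ℂ, (Complex.I * z) • H = z • (Complex.I • H) := by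
    intro z; rw [smul_smul, mul_comm]
  have h := ((hasDerivAt_exp_smul_const' (𝕂 := ℂ) (Complex.I • H) ((s : ℝ) : ℂ)).scomp s
    Complex.ofRealCLM.hasDerivAt)
  simp only [Function.comp_def, key, Complex.ofRealCLM_apply, Complex.ofReal_one, one_smul] at h ⊢
  convert h using 1
  · rfl
  rw [smul_mul_assoc, ← mul_smul_comm]

private lemma hasDerivAt_expM (s : ℝ) :
    HasDerivAt (fun s : ℝ => NormedSpace.exp ((-(Complex.I * (s : ℂ))) • H))
      (-(Complex.I • (NormedSpace.exp ((-(Complex.I * (s : ℂ))) • H) * H))) s := by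
  have key : ∀ z : ℂ, (-(Complex.I * z)) • H = z • ((-Complex.I) • H) := by
    intro z; rw [smul_smul]; congr 1; ring
  have h := ((hasDerivAt_exp_smul_const (𝕂 := ℂ) ((-Complex.I) • H) ((s : ℝ) : ℂ)).scomp s
    Complex.ofRealCLM.hasDerivAt)
  simp only [Function.comp_def, key, Complex.ofRealCLM_apply, Complex.ofReal_one, one_smul] at h ⊢
  convert h using 1
  · rfl
  simp only [neg_smul, mul_neg, mul_smul_comm]

private lemma commP (s : ℝ) :
    H * NormedSpace.exp ((Complex.I * (s : ℂ)) • H)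
      = NormedSpace.exp ((Complex.I * (s : ℂ)) • H) * H :=
  (((Commute.refl H).smul_left _).exp_left).symm.eq

private lemma commM (s : ℝ) :
    H * NormedSpace.exp ((-(Complex.I * (s : ℂ))) • H)
      = NormedSpace.exp ((-(Complex.I * (s : ℂ))) • H) * H :=
  (((Commute.refl H).smul_left _).exp_left).symm.eq

private lemma hasDerivAt_heisQ (s : ℝ) :
    HasDerivAt (heisQ H Q) (heisI H Q s) s := by
  have h := ((hasDerivAt_expP H s).mul_const Q).mul (hasDerivAt_expM H s)
  convert h using 1
  · rfl
  simp only [heisI, heisQ]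
  set U := NormedSpace.exp ((Complex.I * (s : ℂ)) • H) with hU
  set V := NormedSpace.exp ((-(Complex.I * (s : ℂ))) • H) with hV
  rw [← commM H s, commP H s]
  have h2 : U * Q * (-(Complex.I • (H * V))) = Complex.I • (-(U * Q * (H * V))) := by
    rw [← smul_neg, mul_smul_comm, mul_neg]
  rw [h2, smul_mul_assoc, smul_mul_assoc, ← smul_add]
  congr 1
  noncomm_ring

private lemma continuous_heisI : Continuous (heisI H Q) := by
  have c1 : Continuous fun s : ℝ => NormedSpace.exp ((Complex.I * (s : ℂ)) • H) :=
    (by letI : NormedAlgebra ℚ A := NormedAlgebra.restrictScalars ℚ ℂ A; exact NormedSpace.exp_continuous : Continuous (NormedSpace.exp : A → A)).comp (by fun_prop)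
  have c2 : Continuous fun s : ℝ => NormedSpace.exp ((-(Complex.I * (s : ℂ))) • H) :=
    (by letI : NormedAlgebra ℚ A := NormedAlgebra.restrictScalars ℚ ℂ A; exact NormedSpace.exp_continuous : Continuous (NormedSpace.exp : A → A)).comp (by fun_prop)
  unfold heisI
  fun_prop

private lemma continuous_heisQ : Continuous (heisQ H Q) := by
  have c1 : Continuous fun s : ℝ => NormedSpace.exp ((Complex.I * (s : ℂ)) • H) :=
    (by letI : NormedAlgebra ℚ A := NormedAlgebra.restrictScalars ℚ ℂ A; exact NormedSpace.exp_continuous : Continuous (NormedSpace.exp : A → A)).comp (by fun_prop)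
  have c2 : Continuous fun s : ℝ => NormedSpace.exp ((-(Complex.I * (s : ℂ))) • H) :=
    (by letI : NormedAlgebra ℚ A := NormedAlgebra.restrictScalars ℚ ℂ A; exact NormedSpace.exp_continuous : Continuous (NormedSpace.exp : A → A)).comp (by fun_prop)
  unfold heisQ
  fun_prop

private lemma integral_heisI (a b : ℝ) :
    (∫ s in a..b, heisI H Q s) = heisQ H Q b - heisQ H Q a :=
  intervalIntegral.integral_eq_sub_of_hasDerivAt (fun s _ => hasDerivAt_heisQ H Q s)
    ((continuous_heisI H Q).intervalIntegrable a b)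

private lemma heisQ_zero : heisQ H Q 0 = Q := by
  simp [heisQ]

end aux

section aux2
set_option linter.unusedSectionVars false
variable {A : Type*} [NormedRing A] [NormedAlgebra ℂ A] [CompleteSpace A]

private lemma int_const_mul (c : A) {f : ℝ → A} {a b : ℝ}
    (hf : IntervalIntegrable f volume a b) :
    (∫ x in a..b, c * f x) = c * ∫ x in a..b, f x := by
  simpa using ((ContinuousLinearMap.mul ℂ A c).intervalIntegral_comp_comm hf)

private lemma int_mul_const (c : A) {f : ℝ → A} {a b : ℝ}
    (hf : IntervalIntegrable f volume a b) :
    (∫ x in a..b, f x * c) = (∫ x in a..b, f x) * c := by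
  simpa using (((ContinuousLinearMap.mul ℂ A).flip c).intervalIntegral_comp_comm hf)

end aux2


/-- Second-order coefficient of the identity equating the `T`-ordered exponential of the
interaction Hamiltonian with the Matthews `T*`-ordered exponential of the current:
`∫₀ᵗ∫₀ᵗ T(I(t₁)I(t₂)) + ∫₀ᵗ [Q(s),I(s)] ds = Q(t)² − 2Q(t)Q + Q²`. -/
theorem matthews_second_order {A : Type*} [NormedRing A] [NormedAlgebra ℂ A]
    [CompleteSpace A] (H Q : A) (t : ℝ) (ht : 0 ≤ t) :
    (∫ t₁ in (0:ℝ)..t, ∫ t₂ in (0:ℝ)..t,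
        (if t₂ ≤ t₁ then heisI H Q t₁ * heisI H Q t₂ else heisI H Q t₂ * heisI H Q t₁))
      + (∫ s in (0:ℝ)..t, (heisQ H Q s * heisI H Q s - heisI H Q s * heisQ H Q s))
      = heisQ H Q t * heisQ H Q t - 2 * (heisQ H Q t * Q) + Q * Q := by
  have contI := continuous_heisI H Q
  have contQ := continuous_heisQ H Q
  have inner_eq : Set.EqOn
      (fun t₁ => ∫ t₂ in (0:ℝ)..t,
        (if t₂ ≤ t₁ then heisI H Q t₁ * heisI H Q t₂ else heisI H Q t₂ * heisI H Q t₁))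
      (fun t₁ => heisI H Q t₁ * (heisQ H Q t₁ - Q)
        + (heisQ H Q t - heisQ H Q t₁) * heisI H Q t₁) (Set.uIcc 0 t) := by
    intro t₁ ht₁
    rw [Set.uIcc_of_le ht] at ht₁
    have cont_if : Continuous fun t₂ =>
        (if t₂ ≤ t₁ then heisI H Q t₁ * heisI H Q t₂ else heisI H Q t₂ * heisI H Q t₁) := by
      refine Continuous.if_le (by fun_prop) (by fun_prop) continuous_id continuous_const ?_
      intro x hx; rw [hx]
    have e1 : (∫ t₂ in (0:ℝ)..t₁,
        (if t₂ ≤ t₁ then heisI H Q t₁ * heisI H Q t₂ else heisI H Q t₂ * heisI H Q t₁))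
        = ∫ t₂ in (0:ℝ)..t₁, heisI H Q t₁ * heisI H Q t₂ := by
      refine intervalIntegral.integral_congr fun x hx => ?_
      rw [Set.uIcc_of_le ht₁.1] at hx
      simp only [if_pos hx.2]
    have e2 : (∫ t₂ in t₁..t,
        (if t₂ ≤ t₁ then heisI H Q t₁ * heisI H Q t₂ else heisI H Q t₂ * heisI H Q t₁))
        = ∫ t₂ in t₁..t, heisI H Q t₂ * heisI H Q t₁ := by
      refine intervalIntegral.integral_congr fun x hx => ?_
      rw [Set.uIcc_of_le ht₁.2] at hx
      by_cases hx2 : x ≤ t₁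
      · have hxe : x = t₁ := le_antisymm hx2 hx.1
        subst hxe; simp
      · rw [if_neg hx2]
    simp only
    rw [← intervalIntegral.integral_add_adjacent_intervals
        (cont_if.intervalIntegrable 0 t₁) (cont_if.intervalIntegrable t₁ t), e1, e2,
      int_const_mul _ (contI.intervalIntegrable 0 t₁),
      int_mul_const _ (contI.intervalIntegrable t₁ t),
      integral_heisI, integral_heisI, heisQ_zero]
  rw [intervalIntegral.integral_congr inner_eq,
    ← intervalIntegral.integral_add (Continuous.intervalIntegrable (by fun_prop) 0 t)
      (Continuous.intervalIntegrable (by fun_prop) 0 t)]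
  have key : Set.EqOn
      (fun s => heisI H Q s * (heisQ H Q s - Q) + (heisQ H Q t - heisQ H Q s) * heisI H Q s
        + (heisQ H Q s * heisI H Q s - heisI H Q s * heisQ H Q s))
      (fun s => heisQ H Q t * heisI H Q s - heisI H Q s * Q) (Set.uIcc 0 t) := by
    intro s _
    simp only
    noncomm_ring
  rw [intervalIntegral.integral_congr key,
    intervalIntegral.integral_sub (Continuous.intervalIntegrable (by fun_prop) 0 t)
      (Continuous.intervalIntegrable (by fun_prop) 0 t),
    int_const_mul _ (contI.intervalIntegrable 0 t),
    int_mul_const _ (contI.intervalIntegrable 0 t),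
    integral_heisI, heisQ_zero]
  noncomm_ring
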